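/- arXiv:1703.01904 — 3 statements merged into one kernel-verified Lean document; each statement's English description precedes it below -/
import Mathlib

section
/- For every integer j ≥ 0, the identity 1 + Σ_{m=0}^{j} B_{2m+2} * (4^{m+1} − 16^{m+1}) * (2j+1)! / ((2j−2m)! * (2m+2)!) = 0 holds, where B_n denotes the n-th Bernoulli number. -/
open PowerSeries
open scoped Nat

noncomputable abbrev E : PowerSeries ℚ := exp ℚ
noncomputable abbrev Bps : PowerSeries ℚ := bernoulliPowerSeries ℚ
noncomputable abbrev H : PowerSeries ℚ := (rescale (2:ℚ) Bps - rescale (4:ℚ) Bps) * E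

lemma e2 : E ^ 2 = rescale (2:ℚ) E := by
  rw [exp_pow_eq_rescale_exp]; norm_num

lemma e4 : E ^ 4 = rescale (4:ℚ) E := by
  rw [exp_pow_eq_rescale_exp]; norm_num

lemma h2 : rescale (2:ℚ) Bps * (E ^ 2 - 1) = 2 * X := by
  have := congrArg (rescale (2:ℚ)) (bernoulliPowerSeries_mul_exp_sub_one ℚ)
  rw [e2]
  simpa [map_mul, map_sub, map_one, rescale_X, map_ofNat] using this

lemma h4 : rescale (4:ℚ) Bps * (E ^ 4 - 1) = 4 * X := by
  have := congrArg (rescale (4:ℚ)) (bernoulliPowerSeries_mul_exp_sub_one ℚ)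
  rw [e4]
  simpa [map_mul, map_sub, map_one, rescale_X, map_ofNat] using this

lemma hne4 : E ^ 4 - (1 : PowerSeries ℚ) ≠ 0 := by
  intro h
  have := congrArg (coeff 1) h
  rw [e4] at this
  simp [coeff_rescale, coeff_exp] at this

lemma keyH : H * (E ^ 2 + 1) = 2 * X * E := by
  apply mul_right_cancel₀ hne4
  have h2 := h2
  have h4 := h4
  unfold H
  linear_combination (E * (E ^ 2 + 1) ^ 2) * h2 - (E * (E ^ 2 + 1)) * h4

lemma hEE' : E * rescale (-1:ℚ) E = 1 := by
  have h := exp_mul_exp_eq_exp_add (1:ℚ) (-1)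
  norm_num [rescale_one, rescale_zero, constantCoeff_exp] at h
  simpa [rescale_one, rescale_zero, constantCoeff_exp] using h

lemma hne' : (rescale (-1:ℚ) E) ^ 2 + 1 ≠ 0 := by
  intro h
  have := congrArg (constantCoeff) h
  simp [map_pow, rescale_zero] at this
  rw [show ((constantCoeff) (rescale (-1:ℚ) E)) = 1 from by
    simp [← coeff_zero_eq_constantCoeff_apply, coeff_rescale, coeff_exp]] at this
  norm_num at this

lemma hneg : rescale (-1:ℚ) H = - H := by
  apply mul_right_cancel₀ hne'
  have h := congrArg (rescale (-1:ℚ)) keyH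
  simp only [map_mul, map_add, map_pow, map_one, map_ofNat, rescale_X, map_neg] at h
  have hmm : rescale (-1:ℚ) H =
      rescale (-1:ℚ) (rescale (2:ℚ) Bps - rescale (4:ℚ) Bps) * rescale (-1:ℚ) E := map_mul _ _ _
  have hb : (-H) * ((rescale (-1:ℚ) E) ^ 2 + 1) = -(2 * X * rescale (-1:ℚ) E) := by
    have k := keyH
    have e := hEE'
    linear_combination (-(rescale (-1:ℚ) E) ^ 2) * k +
      (H * (E * rescale (-1:ℚ) E + 1) - 2 * X * rescale (-1:ℚ) E) * e
  rw [hmm]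
  linear_combination h - hb

lemma coeff_H_even (n : ℕ) (hn : Even n) : coeff n H = 0 := by
  have := congrArg (coeff n) hneg
  rw [coeff_rescale, map_neg, hn.neg_one_pow, one_mul] at this
  linarith

lemma evenSum (n : ℕ) (hn : Even n) :
    ∑ k ∈ Finset.range (n+1), (n.choose k : ℚ) * ((2:ℚ)^k - 4^k) * bernoulli k = 0 := by
  have h0 := coeff_H_even n hn
  rw [show H = (rescale (2:ℚ) Bps - rescale (4:ℚ) Bps) * E from rfl, coeff_mul,
    Finset.Nat.sum_antidiagonal_eq_sum_range_succ_mk] at h0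
  simp only [map_sub, coeff_rescale, bernoulliPowerSeries, coeff_mk, coeff_exp,
    Algebra.algebraMap_self_apply] at h0
  have step : ∀ k ∈ Finset.range (n+1),
      (n.choose k : ℚ) * ((2:ℚ)^k - 4^k) * bernoulli k =
      (n ! : ℚ) * (((2:ℚ)^k * (bernoulli k / k !) - (4:ℚ)^k * (bernoulli k / k !)) *
        (1 / ((n - k)! : ℚ))) := by
    intro k hk
    rw [Nat.cast_choose ℚ (Nat.lt_succ_iff.mp (Finset.mem_range.mp hk))]
    have hk1 : (k ! : ℚ) ≠ 0 := Nat.cast_ne_zero.mpr (Nat.factorial_ne_zero _)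
    have hk2 : (((n - k)!) : ℚ) ≠ 0 := Nat.cast_ne_zero.mpr (Nat.factorial_ne_zero _)
    field_simp
  rw [Finset.sum_congr rfl step, ← Finset.mul_sum, h0, mul_zero]

lemma bernoulli_odd_zero {n : ℕ} (h : Odd n) (h1 : 1 < n) : bernoulli n = 0 := by
  rw [bernoulli, bernoulli'_eq_zero_of_odd h h1, mul_zero]

lemma sum_split (j : ℕ) (g : ℕ → ℚ) :
    ∑ k ∈ Finset.range (2*j+3), g k =
    g 0 + ∑ m ∈ Finset.range (j+1), (g (2*m+1) + g (2*m+2)) := by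
  induction j with
  | zero => norm_num [Finset.sum_range_succ]; ring
  | succ j ih =>
      have e : 2*(j+1)+3 = (2*j+3)+1+1 := by ring
      rw [e, Finset.sum_range_succ, Finset.sum_range_succ, ih]
      simp only [Finset.sum_range_succ]
      rw [show 2*(j+1)+1 = 2*j+3 from by ring, show 2*(j+1)+2 = 2*j+3+1 from by ring]
      ring

lemma evenPartSum (j : ℕ) :
    ∑ m ∈ Finset.range (j+1),
      ((2*j+2).choose (2*m+2) : ℚ) * ((2:ℚ)^(2*m+2) - 4^(2*m+2)) * bernoulli (2*m+2)
      = -(2*(j:ℚ)+2) := by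
  have hA := evenSum (2*j+2) ⟨j+1, by ring⟩
  rw [show 2*j+2+1 = 2*j+3 by ring, sum_split] at hA
  rw [Finset.sum_add_distrib] at hA
  have hodd : ∑ m ∈ Finset.range (j+1),
      ((2*j+2).choose (2*m+1) : ℚ) * ((2:ℚ)^(2*m+1) - 4^(2*m+1)) * bernoulli (2*m+1)
      = 2*(j:ℚ)+2 := by
    rw [Finset.sum_eq_single_of_mem 0 (Finset.mem_range.mpr (Nat.succ_pos j))]
    · norm_num [bernoulli_one]
      ring
    · intro m _ hm0
      rw [bernoulli_odd_zero ⟨m, by ring⟩ (by omega), mul_zero]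
  simp only [Nat.choose_zero_right, pow_zero, sub_self, Nat.cast_one, one_mul, mul_zero,
    zero_mul, bernoulli_zero] at hA
  rw [hodd] at hA
  linarith

theorem bernoulli_sum_identity (j : ℕ) :
    1 + ∑ m ∈ Finset.range (j + 1),
      bernoulli (2 * m + 2) * ((4 : ℚ) ^ (m + 1) - 16 ^ (m + 1)) * (2 * j + 1)! /
        ((2 * j - 2 * m)! * (2 * m + 2)!) = 0 := by
  have hE := evenPartSum j
  have n3 : (2*(j:ℚ)+2) ≠ 0 := by positivity
  have hstep : ∀ m ∈ Finset.range (j+1),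
      bernoulli (2*m+2) * ((4:ℚ)^(m+1) - 16^(m+1)) * (2*j+1)! / ((2*j-2*m)! * (2*m+2)!)
      = (((2*j+2).choose (2*m+2) : ℚ) * ((2:ℚ)^(2*m+2) - 4^(2*m+2)) * bernoulli (2*m+2)) /
          (2*(j:ℚ)+2) := by
    intro m hm
    have hm' : m ≤ j := Nat.lt_succ_iff.mp (Finset.mem_range.mp hm)
    have hle : 2*m+2 ≤ 2*j+2 := by omega
    rw [Nat.cast_choose ℚ hle, show 2*j+2 - (2*m+2) = 2*j - 2*m from by omega]
    have h1 : ((4:ℚ))^(m+1) = 2^(2*m+2) := by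
      rw [show 2*m+2 = 2*(m+1) from by ring, pow_mul]; norm_num
    have h2 : ((16:ℚ))^(m+1) = 4^(2*m+2) := by
      rw [show 2*m+2 = 2*(m+1) from by ring, pow_mul]; norm_num
    have hf : (((2*j+2)! : ℕ) : ℚ) = (2*(j:ℚ)+2) * (((2*j+1)! : ℕ) : ℚ) := by
      rw [show 2*j+2 = (2*j+1)+1 from rfl, Nat.factorial_succ]; push_cast; ring
    rw [h1, h2, hf]
    have n1 : (((2*j-2*m)! : ℕ) : ℚ) ≠ 0 := Nat.cast_ne_zero.mpr (Nat.factorial_ne_zero _)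
    have n2 : (((2*m+2)! : ℕ) : ℚ) ≠ 0 := Nat.cast_ne_zero.mpr (Nat.factorial_ne_zero _)
    field_simp
  rw [Finset.sum_congr rfl hstep, ← Finset.sum_div, hE]
  field_simp
  ring
end

section
/- For every j ≥ 1, the identity 1/(4j) + Σ_{m=1}^{i} (E_{2m}/(4m)) C(2j−1, 2j−2m) = 0 holds whenever i ≥ j, where E_{2m} are the Euler numbers. Equivalently, 1/(4j) + Σ_{m=1}^{j} (E_{2m}/(4m)) C(2j−1, 2j−2m) = 0. -/
open scoped Nat

/-- The formal power series sech(z) = 1/cosh(z) over ℚ. -/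
noncomputable def sechSeries : PowerSeries ℚ :=
  (PowerSeries.mk fun n => if Even n then 1 / n ! else 0)⁻¹

/-- The n-th Euler number, defined by sech(z) = Σ E_n z^n / n!. -/
noncomputable def eulerNumber (n : ℕ) : ℚ :=
  n ! * PowerSeries.coeff n sechSeries

lemma sum_even_aux (f : ℕ → ℚ) (hf : ∀ k, Odd k → f k = 0) (n : ℕ) :
    ∑ k ∈ Finset.range (2 * n + 2), f k = ∑ m ∈ Finset.range (n + 1), f (2 * m) := by
  induction n with
  | zero =>
    simp [Finset.sum_range_succ, hf 1 ⟨0, by ring⟩]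
  | succ n ih =>
    have h2 : 2 * (n + 1) + 2 = (2 * n + 2) + 1 + 1 := by ring
    rw [h2, Finset.sum_range_succ, Finset.sum_range_succ, ih,
      Finset.sum_range_succ (f := fun m => f (2 * m)) (n := n + 1),
      hf (2 * n + 2 + 1) ⟨n + 1, by ring⟩]
    have : 2 * (n + 1) = 2 * n + 2 := by ring
    rw [this]
    ring

lemma cosh_mul_sech :
    (PowerSeries.mk fun n => if Even n then (1 : ℚ) / n ! else 0) * sechSeries = 1 := by
  apply PowerSeries.mul_inv_cancel
  simp

lemma coeff_sech (n : ℕ) :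
    PowerSeries.coeff n sechSeries = eulerNumber n / n ! := by
  rw [eulerNumber]
  field_simp [Nat.factorial_ne_zero]

lemma key (j : ℕ) (hj : 1 ≤ j) :
    ∑ m ∈ Finset.range (j + 1),
      ((2 * j).choose (2 * m) : ℚ) * eulerNumber (2 * m) = 0 := by
  have h := congrArg (PowerSeries.coeff (2 * j)) cosh_mul_sech
  rw [PowerSeries.coeff_mul, Finset.Nat.sum_antidiagonal_eq_sum_range_succ_mk,
    PowerSeries.coeff_one, if_neg (by omega)] at h
  set f : ℕ → ℚ := fun k =>
    PowerSeries.coeff k (PowerSeries.mk fun n => if Even n then (1 : ℚ) / n ! else 0) *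
      PowerSeries.coeff (2 * j - k) sechSeries with hfdef
  have hodd : ∀ k, Odd k → f k = 0 := by
    intro k hk
    simp [hfdef, Nat.not_even_iff_odd.mpr hk]
  have hsum : ∑ k ∈ Finset.range (2 * j + 2), f k = 0 := by
    rw [Finset.sum_range_succ, hodd (2 * j + 1) ⟨j, by ring⟩, add_zero]
    exact h
  rw [sum_even_aux f hodd j] at hsum
  have hf2 : ∀ m ∈ Finset.range (j + 1),
      f (2 * m) = 1 / (2 * m)! * (eulerNumber (2 * j - 2 * m) / (2 * j - 2 * m)!) := by
    intro m hm
    simp [hfdef, coeff_sech]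
  rw [Finset.sum_congr rfl hf2] at hsum
  rw [← Finset.sum_range_reflect]
  have hterm : ∀ m ∈ Finset.range (j + 1),
      ((2 * j).choose (2 * (j + 1 - 1 - m)) : ℚ) * eulerNumber (2 * (j + 1 - 1 - m))
        = (2 * j)! * (1 / (2 * m)! * (eulerNumber (2 * j - 2 * m) / (2 * j - 2 * m)!)) := by
    intro m hm
    have hm' : m ≤ j := by
      have := Finset.mem_range.mp hm; omega
    have e1 : j + 1 - 1 - m = j - m := by omega
    have e2 : 2 * (j - m) = 2 * j - 2 * m := by omega
    have h2m : 2 * m ≤ 2 * j := by omega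
    have e3 : (2 * j).choose (2 * j - 2 * m) = (2 * j).choose (2 * m) :=
      Nat.choose_symm h2m
    rw [e1, e2, e3, Nat.cast_choose ℚ h2m]
    field_simp
  rw [Finset.sum_congr rfl hterm, ← Finset.mul_sum, hsum, mul_zero]

theorem euler_binom_identity (j : ℕ) (hj : 1 ≤ j) :
    1 / (4 * (j : ℚ)) +
      ∑ m ∈ Finset.Icc 1 j,
        eulerNumber (2 * m) / (4 * m) * ((2 * j - 1).choose (2 * j - 2 * m) : ℚ) = 0 := by
  have hE0 : eulerNumber 0 = 1 := by
    rw [eulerNumber, sechSeries]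
    rw [PowerSeries.coeff_zero_eq_constantCoeff, PowerSeries.constantCoeff_inv]
    simp
  have hk := key j hj
  have hterm : ∀ m ∈ Finset.Icc 1 j,
      eulerNumber (2 * m) / (4 * m) * ((2 * j - 1).choose (2 * j - 2 * m) : ℚ)
        = ((2 * j).choose (2 * m) : ℚ) * eulerNumber (2 * m) / (4 * j) := by
    intro m hm
    obtain ⟨hm1, hm2⟩ := Finset.mem_Icc.mp hm
    have hc1 : (2 * j - 1).choose (2 * j - 2 * m) = (2 * j - 1).choose (2 * m - 1) := by
      have e : 2 * j - 2 * m = (2 * j - 1) - (2 * m - 1) := by omega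
      rw [e, Nat.choose_symm (by omega)]
    have hc2 : 2 * j * (2 * j - 1).choose (2 * m - 1) = (2 * j).choose (2 * m) * (2 * m) := by
      have h := Nat.add_one_mul_choose_eq (2 * j - 1) (2 * m - 1)
      have e1 : 2 * j - 1 + 1 = 2 * j := by omega
      have e2 : 2 * m - 1 + 1 = 2 * m := by omega
      rw [e1, e2] at h
      exact h
    have hc2' : (2 * (j : ℚ)) * ((2 * j - 1).choose (2 * m - 1) : ℚ)
        = ((2 * j).choose (2 * m) : ℚ) * (2 * m) := by
      exact_mod_cast congrArg (fun x : ℕ => (x : ℚ)) hc2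
    have hj0 : (j : ℚ) ≠ 0 := Nat.cast_ne_zero.mpr (by omega)
    have hm0 : (m : ℚ) ≠ 0 := Nat.cast_ne_zero.mpr (by omega)
    rw [hc1]
    field_simp
    linear_combination eulerNumber (2 * m) / 2 * hc2'
  rw [Finset.sum_congr rfl hterm]
  have hj0 : (j : ℚ) ≠ 0 := Nat.cast_ne_zero.mpr (by omega)
  have hins : Finset.range (j + 1) = insert 0 (Finset.Icc 1 j) := by
    ext x
    simp only [Finset.mem_range, Finset.mem_insert, Finset.mem_Icc]
    omega
  rw [hins, Finset.sum_insert (by simp)] at hk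
  have hneg : ∑ m ∈ Finset.Icc 1 j, ((2 * j).choose (2 * m) : ℚ) * eulerNumber (2 * m) = -1 := by
    simp only [mul_zero, Nat.choose_zero_right, Nat.cast_one, one_mul, hE0] at hk
    linarith
  rw [← Finset.sum_div, hneg]
  field_simp
  ring
end

section
/- For every j ≥ 1, the identity 2^{−2i−1}/(2j+1) − Σ_{m=1}^{j} (B_{2m+2}(4^{m−i} − 4^{2m−i+1})/(2m(m+1)(2m+1))) C(2j−1, 2j−2m) = 0 holds for every i (the 2^{−i} factor cancels); equivalently, 1/(2(2j+1)) = Σ_{m=1}^{j} (B_{2m+2}(4^{m} − 4^{2m+1})/(2m(m+1)(2m+1))) C(2j−1, 2j−2m). -/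
open PowerSeries Finset
open scoped Nat

local notation "E" => PowerSeries.exp ℚ
local notation "B" => bernoulliPowerSeries ℚ

lemma resc_bern (c : ℚ) :
    rescale c B * (rescale c E - 1) = PowerSeries.C c * X := by
  have h := bernoulliPowerSeries_mul_exp_sub_one ℚ
  have := congrArg (rescale c) h
  simpa [map_mul, map_sub, map_one, rescale_X] using this

lemma E2_eq : rescale (2:ℚ) E = E * E := by
  have := PowerSeries.exp_mul_exp_eq_exp_add (1:ℚ) 1
  norm_num at this
  exact this.symm

lemma E4_eq : rescale (4:ℚ) E = rescale (2:ℚ) E * rescale (2:ℚ) E := by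
  have := PowerSeries.exp_mul_exp_eq_exp_add (2:ℚ) 2
  norm_num at this
  exact this.symm

lemma coeff_one_rescale_exp (c : ℚ) : (PowerSeries.coeff 1) (rescale c E - 1) = c := by
  simp [PowerSeries.coeff_exp, Nat.factorial]

lemma E2_sub_one_ne : rescale (2:ℚ) E - 1 ≠ 0 := by
  intro h
  have := coeff_one_rescale_exp 2
  rw [h] at this; simp at this

lemma E4_sub_one_ne : rescale (4:ℚ) E - 1 ≠ 0 := by
  intro h
  have := coeff_one_rescale_exp 4
  rw [h] at this; simp at this

lemma E2_add_one_ne : rescale (2:ℚ) E + 1 ≠ 0 := by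
  intro h
  have : (PowerSeries.constantCoeff) (rescale (2:ℚ) E + 1) = 2 := by
    have h1 : (PowerSeries.constantCoeff) (rescale (2:ℚ) E) = 1 := by
      rw [← PowerSeries.coeff_zero_eq_constantCoeff_apply]
      simp [PowerSeries.coeff_exp]
    rw [map_add, h1, map_one]
    norm_num
  rw [h] at this; simp at this

lemma E_ne : (E : PowerSeries ℚ) ≠ 0 := by
  intro h
  have : (PowerSeries.constantCoeff) E = 1 := PowerSeries.constantCoeff_exp (A := ℚ)
  rw [h] at this; simp at this

lemma key1 : E * (rescale (2:ℚ) B - rescale (4:ℚ) B) * (rescale (2:ℚ) E + 1)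
    = 2 * X * E := by
  have h2 : rescale (2:ℚ) B * (rescale (2:ℚ) E - 1) = 2 * X := by
    have := resc_bern 2
    rwa [show (PowerSeries.C) (2:ℚ) = 2 from map_ofNat _ 2] at this
  have h4 : rescale (4:ℚ) B * (rescale (4:ℚ) E - 1) = 4 * X := by
    have := resc_bern 4
    rwa [show (PowerSeries.C) (4:ℚ) = 4 from map_ofNat _ 4] at this
  have hEE := E4_eq
  apply mul_right_cancel₀ (mul_ne_zero E2_sub_one_ne E4_sub_one_ne)
  linear_combination (E * (rescale (2:ℚ) E + 1) * (rescale (4:ℚ) E - 1)) * h2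
    - (E * (rescale (2:ℚ) E + 1) * (rescale (2:ℚ) E - 1)) * h4
    + 4 * X * E * hEE

lemma key2 : rescale (-1:ℚ) (E * (rescale (2:ℚ) B - rescale (4:ℚ) B))
    = - (E * (rescale (2:ℚ) B - rescale (4:ℚ) B)) := by
  set G := E * (rescale (2:ℚ) B - rescale (4:ℚ) B) with hG
  have hkey1 : G * (rescale (2:ℚ) E + 1) = 2 * X * E := key1
  have hσ : rescale (-1:ℚ) G * (rescale (-1:ℚ) (rescale (2:ℚ) E) + 1)
      = 2 * (-X) * rescale (-1:ℚ) E := by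
    have := congrArg (rescale (-1:ℚ)) hkey1
    simp only [map_mul, map_add, map_one, map_ofNat, rescale_X] at this
    rw [this, map_neg, map_one]; ring
  have h1 : rescale (-1:ℚ) E * E = 1 := by
    have := PowerSeries.exp_mul_exp_eq_exp_add (-1:ℚ) 1
    norm_num at this
    rw [this]
  have h2 : rescale (-1:ℚ) (rescale (2:ℚ) E) * (rescale (2:ℚ) E) = 1 := by
    rw [rescale_rescale]
    have := PowerSeries.exp_mul_exp_eq_exp_add (2 * -1:ℚ) 2
    norm_num at this
    rw [show ((2:ℚ) * -1) = (-2:ℚ) by norm_num, this]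
  have h3 : rescale (2:ℚ) E = E * E := E2_eq
  have hmain : rescale (-1:ℚ) G * (rescale (2:ℚ) E + 1) = -G * (rescale (2:ℚ) E + 1) := by
    apply mul_right_cancel₀ E_ne
    linear_combination E * hkey1 + (rescale (2:ℚ) E * E) * hσ
      - (rescale (-1:ℚ) G * E) * h2 - (2 * X * rescale (2:ℚ) E) * h1 - (2 * X) * h3
  exact mul_right_cancel₀ E2_add_one_ne hmain

lemma coeff_G_even_zero {n : ℕ} (hn : Even n) :
    PowerSeries.coeff n (E * (rescale (2:ℚ) B - rescale (4:ℚ) B)) = 0 := by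
  have h := congrArg (PowerSeries.coeff n) key2
  rw [coeff_rescale, hn.neg_one_pow, one_mul, map_neg] at h
  linarith

lemma sum_choose_bern_zero {n : ℕ} (hn : Even n) :
    ∑ p ∈ Finset.range (n+1), (n.choose p : ℚ) * bernoulli p * ((2:ℚ)^p - 4^p) = 0 := by
  have h := coeff_G_even_zero hn
  rw [PowerSeries.coeff_mul, Nat.sum_antidiagonal_eq_sum_range_succ_mk] at h
  have h2 : ∑ p ∈ Finset.range (n+1),
      (n.choose p : ℚ) * bernoulli (n - p) * ((2:ℚ)^(n-p) - 4^(n-p)) = 0 := by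
    have h3 : (Nat.factorial n : ℚ) *
        (∑ k ∈ Finset.range (n+1), (PowerSeries.coeff k) E *
          (PowerSeries.coeff (n - k)) (rescale (2:ℚ) B - rescale (4:ℚ) B)) = 0 := by
      rw [show Finset.range (n+1) = Finset.range n.succ from rfl, h, mul_zero]
    rw [Finset.mul_sum] at h3
    rw [← h3]
    apply Finset.sum_congr rfl
    intro p hp
    have hpn : p ≤ n := Nat.lt_succ_iff.mp (Finset.mem_range.mp hp)
    rw [map_sub, coeff_rescale, coeff_rescale, PowerSeries.coeff_exp]
    rw [show (PowerSeries.coeff (n-p)) B = bernoulli (n-p) / (Nat.factorial (n-p) : ℚ) by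
      simp [bernoulliPowerSeries]]
    rw [Nat.cast_choose ℚ hpn]
    have f1 : (Nat.factorial p : ℚ) ≠ 0 := Nat.cast_ne_zero.mpr (Nat.factorial_ne_zero p)
    have f2 : (Nat.factorial (n-p) : ℚ) ≠ 0 := Nat.cast_ne_zero.mpr (Nat.factorial_ne_zero _)
    simp only [map_one, Algebra.algebraMap_self, RingHom.id_apply]
    field_simp
  rw [← Finset.sum_range_reflect] at h2
  rw [← h2]
  apply Finset.sum_congr rfl
  intro p hp
  have hpn : p ≤ n := Nat.lt_succ_iff.mp (Finset.mem_range.mp hp)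
  have e1 : n + 1 - 1 - p = n - p := by omega
  rw [e1, Nat.sub_sub_self hpn, Nat.choose_symm hpn]

lemma pair_sum (f : ℕ → ℚ) (j : ℕ) :
    ∑ k ∈ Finset.range (2*j+3), f k
      = f 0 + f 1 + f 2 + ∑ m ∈ Finset.Icc 1 j, (f (2*m+1) + f (2*m+2)) := by
  induction j with
  | zero => simp [Finset.sum_range_succ]
  | succ j ih =>
    rw [show 2*(j+1)+3 = (2*j+3)+1+1 by ring, Finset.sum_range_succ, Finset.sum_range_succ, ih,
      Finset.sum_Icc_succ_top (by omega : 1 ≤ j+1)]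
    ring_nf

lemma bernoulli_two_q : bernoulli 2 = 1/6 := by
  rw [bernoulli_eq_bernoulli'_of_ne_one (by norm_num)]
  norm_num

lemma bernoulli_odd_zero_s14 (m : ℕ) (hm : 1 ≤ m) : bernoulli (2*m+1) = 0 := by
  rw [bernoulli_eq_bernoulli'_of_ne_one (by omega)]
  exact bernoulli'_eq_zero_of_odd ⟨m, by ring⟩ (by omega)

lemma main_sum (j : ℕ) (hj : 1 ≤ j) :
    ∑ m ∈ Finset.Icc 1 j, ((2*j+2).choose (2*m+2) : ℚ) * bernoulli (2*m+2)
      * ((2:ℚ)^(2*m+2) - 4^(2*m+2)) = (2*j+2) * (2*j) := by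
  set f : ℕ → ℚ := fun k => ((2*j+2).choose k : ℚ) * bernoulli k * ((2:ℚ)^k - 4^k) with hf
  have h0 := sum_choose_bern_zero (n := 2*j+2) ⟨j+1, by ring⟩
  rw [show 2*j+2+1 = 2*j+3 from rfl] at h0
  have hp := pair_sum f j
  rw [h0] at hp
  have hf0 : f 0 = 0 := by simp [hf]
  have hf1 : f 1 = 2*(j:ℚ)+2 := by
    simp [hf, bernoulli_one]
    push_cast
    ring
  have hf2 : f 2 = -((2*(j:ℚ)+2) * (2*j+1)) := by
    rw [hf]
    simp only [Nat.cast_choose_two, bernoulli_two_q]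
    push_cast
    ring
  have hodd : ∀ m ∈ Finset.Icc 1 j, (f (2*m+1) + f (2*m+2)) = f (2*m+2) := by
    intro m hm
    have := bernoulli_odd_zero_s14 m (Finset.mem_Icc.mp hm).1
    simp [hf, this]
  rw [Finset.sum_congr rfl hodd] at hp
  have : ∑ m ∈ Finset.Icc 1 j, f (2*m+2) = -(f 0 + f 1 + f 2) := by linarith
  rw [this, hf0, hf1, hf2]
  push_cast
  ring

lemma fact3 (a : ℕ) : ((a+3)! : ℚ) = (a+3) * (a+2) * (a+1) * (a ! : ℚ) := by
  simp [Nat.factorial_succ]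
  push_cast
  ring

lemma term_eq (j m : ℕ) (h1 : 1 ≤ m) (h2 : m ≤ j) :
    bernoulli (2*m+2) * ((4:ℚ)^m - 4^(2*m+1)) / (2*m*((m:ℚ)+1)*(2*m+1))
        * ((2*j-1).choose (2*j-2*m) : ℚ)
      = (((2*j+2).choose (2*m+2) : ℚ) * bernoulli (2*m+2) * ((2:ℚ)^(2*m+2) - 4^(2*m+2)))
        / (2*(2*(j:ℚ))*(2*(j:ℚ)+1)*(2*(j:ℚ)+2)) := by
  obtain ⟨m', rfl⟩ : ∃ m', m = m'+1 := ⟨m-1, by omega⟩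
  obtain ⟨q, rfl⟩ : ∃ q, j = (m'+1)+q := ⟨j-(m'+1), by omega⟩
  have e1 : 2*((m'+1)+q)-1 = 2*m'+2*q+1 := by omega
  have e2 : 2*((m'+1)+q)-2*(m'+1) = 2*q := by omega
  rw [e1, e2]
  have hc1 : ((2*m'+2*q+1).choose (2*q) : ℚ)
      = ((2*m'+2*q+1)! : ℚ) / (((2*q)! : ℚ) * ((2*m'+1)! : ℚ)) := by
    rw [Nat.cast_choose ℚ (by omega), show 2*m'+2*q+1 - 2*q = 2*m'+1 from by omega]
  have hc2 : ((2*((m'+1)+q)+2).choose (2*(m'+1)+2) : ℚ)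
      = ((2*m'+2*q+4)! : ℚ) / (((2*m'+4)! : ℚ) * ((2*q)! : ℚ)) := by
    rw [show 2*((m'+1)+q)+2 = 2*m'+2*q+4 by ring, show 2*(m'+1)+2 = 2*m'+4 by ring,
      Nat.cast_choose ℚ (by omega), show 2*m'+2*q+4 - (2*m'+4) = 2*q from by omega]
  have hfT : ((2*m'+2*q+4)! : ℚ)
      = (2*(m':ℚ)+2*q+4) * (2*m'+2*q+3) * (2*m'+2*q+2) * ((2*m'+2*q+1)! : ℚ) := by
    rw [show 2*m'+2*q+4 = (2*m'+2*q+1)+3 by ring, fact3]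
    push_cast; ring
  have hfB : ((2*m'+4)! : ℚ) = (2*(m':ℚ)+4) * (2*m'+3) * (2*m'+2) * ((2*m'+1)! : ℚ) := by
    rw [show 2*m'+4 = (2*m'+1)+3 by ring, fact3]
    push_cast; ring
  have hp2 : (2:ℚ)^(2*(m'+1)+2) = 4 * 4^(m'+1) := by
    rw [show 2*(m'+1)+2 = 2*((m'+1)+1) by ring, pow_mul,
      show ((2:ℚ)^2 : ℚ) = 4 by norm_num, pow_succ]
    ring
  have hp4 : (4:ℚ)^(2*(m'+1)+2) = 4 * 4^(2*(m'+1)+1) := by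
    rw [pow_succ]; ring
  rw [hc1, hc2, hfT, hfB, hp2, hp4]
  have nz1 : ((2*m'+2*q+1)! : ℚ) ≠ 0 := Nat.cast_ne_zero.mpr (Nat.factorial_ne_zero _)
  have nz2 : ((2*m'+1)! : ℚ) ≠ 0 := Nat.cast_ne_zero.mpr (Nat.factorial_ne_zero _)
  have nz3 : ((2*q)! : ℚ) ≠ 0 := Nat.cast_ne_zero.mpr (Nat.factorial_ne_zero _)
  push_cast
  field_simp
  ring

lemma part2 (j : ℕ) (hj : 1 ≤ j) :
    1 / (2 * (2 * (j : ℚ) + 1)) =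
      ∑ m ∈ Finset.Icc 1 j,
        bernoulli (2 * m + 2) * ((4 : ℚ) ^ m - 4 ^ (2 * m + 1)) /
            (2 * m * ((m : ℚ) + 1) * (2 * m + 1)) *
          ((2 * j - 1).choose (2 * j - 2 * m) : ℚ) := by
  have hsum : ∑ m ∈ Finset.Icc 1 j,
      bernoulli (2 * m + 2) * ((4 : ℚ) ^ m - 4 ^ (2 * m + 1)) /
          (2 * m * ((m : ℚ) + 1) * (2 * m + 1)) *
        ((2 * j - 1).choose (2 * j - 2 * m) : ℚ)
      = (∑ m ∈ Finset.Icc 1 j, ((2*j+2).choose (2*m+2) : ℚ) * bernoulli (2*m+2)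
          * ((2:ℚ)^(2*m+2) - 4^(2*m+2)))
        / (2*(2*(j:ℚ))*(2*(j:ℚ)+1)*(2*(j:ℚ)+2)) := by
    rw [Finset.sum_div]
    apply Finset.sum_congr rfl
    intro m hm
    obtain ⟨hm1, hm2⟩ := Finset.mem_Icc.mp hm
    exact term_eq j m hm1 hm2
  rw [hsum, main_sum j hj]
  have hjq : (1:ℚ) ≤ (j:ℚ) := by exact_mod_cast hj
  have h1 : (2*(j:ℚ)) ≠ 0 := by linarith
  have h2 : (2*(j:ℚ)+1) ≠ 0 := by linarith
  have h3 : (2*(j:ℚ)+2) ≠ 0 := by linarith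
  field_simp

theorem bernoulli_binom_identity (j : ℕ) (hj : 1 ≤ j) :
    (∀ i : ℤ,
      (2 : ℚ) ^ (-2 * i - 1) / (2 * j + 1) -
        ∑ m ∈ Finset.Icc 1 j,
          bernoulli (2 * m + 2) * ((4 : ℚ) ^ ((m : ℤ) - i) - 4 ^ (2 * (m : ℤ) - i + 1)) /
              (2 * m * ((m : ℚ) + 1) * (2 * m + 1)) *
            ((2 * j - 1).choose (2 * j - 2 * m) : ℚ) = 0) ∧
    1 / (2 * (2 * (j : ℚ) + 1)) =
      ∑ m ∈ Finset.Icc 1 j,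
        bernoulli (2 * m + 2) * ((4 : ℚ) ^ m - 4 ^ (2 * m + 1)) /
            (2 * m * ((m : ℚ) + 1) * (2 * m + 1)) *
          ((2 * j - 1).choose (2 * j - 2 * m) : ℚ) := by
  have hp2 := part2 j hj
  refine ⟨?_, hp2⟩
  intro i
  have h4 : (4:ℚ) ≠ 0 := by norm_num
  have hfirst : (2 : ℚ) ^ (-2 * i - 1) / (2 * (j:ℚ) + 1)
      = (4:ℚ) ^ (-i) * (1 / (2 * (2 * (j : ℚ) + 1))) := by
    rw [show (-2 * i - 1 : ℤ) = 2 * (-i) + (-1) by ring, zpow_add₀ (by norm_num : (2:ℚ) ≠ 0),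
      zpow_mul, show ((2:ℚ) ^ (2:ℤ)) = 4 by norm_num]
    rw [show ((2:ℚ) ^ (-1 : ℤ)) = 1/2 by norm_num]
    have hq : (2*(j:ℚ)+1) ≠ 0 := by positivity
    field_simp
  have hsummand : ∀ m ∈ Finset.Icc 1 j,
      bernoulli (2 * m + 2) * ((4 : ℚ) ^ ((m : ℤ) - i) - 4 ^ (2 * (m : ℤ) - i + 1)) /
          (2 * m * ((m : ℚ) + 1) * (2 * m + 1)) *
        ((2 * j - 1).choose (2 * j - 2 * m) : ℚ)
      = (4:ℚ) ^ (-i) *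
        (bernoulli (2 * m + 2) * ((4 : ℚ) ^ m - 4 ^ (2 * m + 1)) /
            (2 * m * ((m : ℚ) + 1) * (2 * m + 1)) *
          ((2 * j - 1).choose (2 * j - 2 * m) : ℚ)) := by
    intro m _
    have ha : (4:ℚ) ^ ((m : ℤ) - i) = (4:ℚ) ^ (-i) * 4 ^ m := by
      rw [sub_eq_add_neg, zpow_add₀ h4, zpow_natCast]
      ring
    have hb : (4:ℚ) ^ (2 * (m : ℤ) - i + 1) = (4:ℚ) ^ (-i) * 4 ^ (2*m+1) := by
      rw [show (2 * (m:ℤ) - i + 1) = ((2*m+1 : ℕ) : ℤ) + (-i) by push_cast; ring,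
        zpow_add₀ h4, zpow_natCast]
      ring
    rw [ha, hb]
    ring
  rw [Finset.sum_congr rfl hsummand, ← Finset.mul_sum, hfirst, ← hp2, ← mul_sub, sub_self,
    mul_zero]
end
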